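/- Let μ_X, μ_Y be probability measures on finite sets Ω_X, Ω_Y, let B ⊆ Ω_X × Ω_Y, and suppose P is a probability measure on Ω_X × Ω_Y with P(B) ≤ α, total variation distance d_TV(μ_X, P_X) ≤ β, and d_TV(μ_Y, P_Y) ≤ γ, where P_X, P_Y denote the marginals of P. Then there exists a probability measure π on Ω_X × Ω_Y with marginals exactly μ_X and μ_Y such that π(B) ≤ α + β + γ. -/

import Mathlib

open Finset

/-- If a (not-necessarily well-coupled) distribution `P` on `ΩX × ΩY` has `P(B) ≤ α`
and its marginals are within total variation `β` and `γ` of `μX` and `μY` respectively,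
then there is an exact coupling `π` of `μX` and `μY` with `π(B) ≤ α + β + γ`. -/
theorem coupling_from_approximate_coupling {ΩX ΩY : Type*} [Fintype ΩX] [Fintype ΩY]
    (μX : ΩX → ℝ) (μY : ΩY → ℝ)
    (hμX0 : ∀ x, 0 ≤ μX x) (hμX1 : ∑ x, μX x = 1)
    (hμY0 : ∀ y, 0 ≤ μY y) (hμY1 : ∑ y, μY y = 1)
    (P : ΩX × ΩY → ℝ) (hP0 : ∀ q, 0 ≤ P q) (hP1 : ∑ q, P q = 1)
    (B : Finset (ΩX × ΩY)) (α β γ : ℝ)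
    (hα : ∑ q ∈ B, P q ≤ α)
    (hβ : ∀ A : Finset ΩX, |(∑ x ∈ A, μX x) - ∑ x ∈ A, (∑ y, P (x, y))| ≤ β)
    (hγ : ∀ A : Finset ΩY, |(∑ y ∈ A, μY y) - ∑ y ∈ A, (∑ x, P (x, y))| ≤ γ) :
    ∃ π : ΩX × ΩY → ℝ,
      (∀ q, 0 ≤ π q) ∧ (∑ q, π q = 1) ∧
      (∀ x, ∑ y, π (x, y) = μX x) ∧
      (∀ y, ∑ x, π (x, y) = μY y) ∧
      ∑ q ∈ B, π q ≤ α + β + γ := by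
  classical
  have key : ∀ (a b : ℝ), 0 ≤ a → 0 ≤ b → min 1 (a / b) * b = min b a := by
    intro a b ha hb
    rcases hb.eq_or_lt with h | h
    · rw [← h]; simp [min_eq_left ha]
    · rcases le_total b a with hba | hab
      · rw [min_eq_left ((one_le_div h).mpr hba), one_mul, min_eq_left hba]
      · rw [min_eq_right ((div_le_one h).mpr hab), div_mul_cancel₀ _ h.ne', min_eq_right hab]
  have minmax : ∀ (a b : ℝ), min b a = b - max 0 (b - a) := by
    intro a b
    rcases le_total b a with h | h
    · rw [min_eq_left h, max_eq_left (by linarith)]; ring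
    · rw [min_eq_right h, max_eq_right (by linarith)]; ring
  set PX : ΩX → ℝ := fun x => ∑ y, P (x, y) with hPXdef
  set PY : ΩY → ℝ := fun y => ∑ x, P (x, y) with hPYdef
  have hPX0 : ∀ x, 0 ≤ PX x := fun x => sum_nonneg fun y _ => hP0 _
  set c : ΩX → ℝ := fun x => min 1 (μX x / PX x) with hcdef
  have hc0 : ∀ x, 0 ≤ c x := fun x => le_min zero_le_one (div_nonneg (hμX0 x) (hPX0 x))
  have hc1 : ∀ x, c x ≤ 1 := fun x => min_le_left _ _
  set P1 : ΩX × ΩY → ℝ := fun q => c q.1 * P q with hP1def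
  have hP10 : ∀ q, 0 ≤ P1 q := fun q => mul_nonneg (hc0 _) (hP0 _)
  have hP1le : ∀ q, P1 q ≤ P q := fun q => by
    calc c q.1 * P q ≤ 1 * P q := mul_le_mul_of_nonneg_right (hc1 _) (hP0 _)
    _ = P q := one_mul _
  have hP1X : ∀ x, ∑ y, P1 (x, y) = min (PX x) (μX x) := by
    intro x
    have : ∑ y, P1 (x, y) = c x * PX x := by
      rw [hPXdef, Finset.mul_sum]
    rw [this]
    exact key (μX x) (PX x) (hμX0 x) (hPX0 x)
  set P1Y : ΩY → ℝ := fun y => ∑ x, P1 (x, y) with hP1Ydef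
  have hP1Y0 : ∀ y, 0 ≤ P1Y y := fun y => sum_nonneg fun x _ => hP10 _
  set d : ΩY → ℝ := fun y => min 1 (μY y / P1Y y) with hddef
  have hd0 : ∀ y, 0 ≤ d y := fun y => le_min zero_le_one (div_nonneg (hμY0 y) (hP1Y0 y))
  have hd1 : ∀ y, d y ≤ 1 := fun y => min_le_left _ _
  set P2 : ΩX × ΩY → ℝ := fun q => d q.2 * P1 q with hP2def
  have hP20 : ∀ q, 0 ≤ P2 q := fun q => mul_nonneg (hd0 _) (hP10 _)
  have hP2le : ∀ q, P2 q ≤ P1 q := fun q => by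
    calc d q.2 * P1 q ≤ 1 * P1 q := mul_le_mul_of_nonneg_right (hd1 _) (hP10 _)
    _ = P1 q := one_mul _
  have hP2Y : ∀ y, ∑ x, P2 (x, y) = min (P1Y y) (μY y) := by
    intro y
    have : ∑ x, P2 (x, y) = d y * P1Y y := by
      rw [hP1Ydef, Finset.mul_sum]
    rw [this]
    exact key (μY y) (P1Y y) (hμY0 y) (hP1Y0 y)
  have hP2Xle : ∀ x, ∑ y, P2 (x, y) ≤ μX x := by
    intro x
    calc ∑ y, P2 (x, y) ≤ ∑ y, P1 (x, y) := sum_le_sum fun y _ => hP2le _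
    _ = min (PX x) (μX x) := hP1X x
    _ ≤ μX x := min_le_right _ _
  set a : ΩX → ℝ := fun x => μX x - ∑ y, P2 (x, y) with hadef
  set b : ΩY → ℝ := fun y => μY y - ∑ x, P2 (x, y) with hbdef
  have ha0 : ∀ x, 0 ≤ a x := fun x => by simp [hadef]; linarith [hP2Xle x]
  have hb0 : ∀ y, 0 ≤ b y := fun y => by
    have := hP2Y y
    simp only [hbdef]
    have : ∑ x, P2 (x, y) ≤ μY y := by rw [hP2Y y]; exact min_le_right _ _
    linarith
  set s : ℝ := ∑ x, a x with hsdef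
  have hs0 : 0 ≤ s := sum_nonneg fun x _ => ha0 x
  have hsum2 : ∑ q, P2 q = ∑ x, ∑ y, P2 (x, y) := Fintype.sum_prod_type _
  have hsum2' : ∑ q, P2 q = ∑ y, ∑ x, P2 (x, y) := Fintype.sum_prod_type_right _
  have hsa : s = 1 - ∑ q, P2 q := by
    rw [hsdef, hsum2, ← hμX1, ← Finset.sum_sub_distrib]
  have hsb : ∑ y, b y = s := by
    rw [hsa, hsum2', ← hμY1, ← Finset.sum_sub_distrib]
  -- the filling term
  set fill : ΩX × ΩY → ℝ := fun q => if s = 0 then 0 else a q.1 * b q.2 / s with hfilldef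
  have hfill0 : ∀ q, 0 ≤ fill q := by
    intro q
    simp only [hfilldef]
    split
    · exact le_refl 0
    · exact div_nonneg (mul_nonneg (ha0 _) (hb0 _)) hs0
  have hfillX : ∀ x, ∑ y, fill (x, y) = a x := by
    intro x
    by_cases h : s = 0
    · have hax : a x = 0 := by
        have := (Finset.sum_eq_zero_iff_of_nonneg (fun x _ => ha0 x)).mp (by rw [← hsdef, h])
        exact this x (mem_univ x)
      simp [hfilldef, h, hax]
    · simp only [hfilldef, if_neg h]
      rw [← Finset.sum_div, ← Finset.mul_sum, hsb]
      field_simp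
  have hfillY : ∀ y, ∑ x, fill (x, y) = b y := by
    intro y
    by_cases h : s = 0
    · have hby : b y = 0 := by
        have hs' : ∑ y, b y = 0 := by rw [hsb, h]
        have := (Finset.sum_eq_zero_iff_of_nonneg (fun y _ => hb0 y)).mp hs'
        exact this y (mem_univ y)
      simp [hfilldef, h, hby]
    · simp only [hfilldef, if_neg h]
      rw [← Finset.sum_div, ← Finset.sum_mul, ← hsdef]
      field_simp
  set π : ΩX × ΩY → ℝ := fun q => P2 q + fill q with hπdef
  have hπ0 : ∀ q, 0 ≤ π q := fun q => add_nonneg (hP20 q) (hfill0 q)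
  have hπX : ∀ x, ∑ y, π (x, y) = μX x := by
    intro x
    simp only [hπdef]
    rw [Finset.sum_add_distrib, hfillX x, hadef]
    ring
  have hπY : ∀ y, ∑ x, π (x, y) = μY y := by
    intro y
    simp only [hπdef]
    rw [Finset.sum_add_distrib, hfillY y, hbdef]
    ring
  have hπ1 : ∑ q, π q = 1 := by
    rw [Fintype.sum_prod_type]
    simp only [hπX]
    exact hμX1
  -- total fill mass is s
  have hfilltot : ∑ q, fill q = s := by
    rw [Fintype.sum_prod_type]
    simp only [hfillX]
    exact hsdef.symm
  -- bound s ≤ β + γ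
  have hposX : ∑ x, max 0 (PX x - μX x) ≤ β := by
    set A : Finset ΩX := univ.filter (fun x => μX x ≤ PX x) with hA
    have h1 : ∑ x, max 0 (PX x - μX x) = ∑ x ∈ A, (PX x - μX x) := by
      rw [hA, Finset.sum_filter]
      apply Finset.sum_congr rfl
      intro x _
      by_cases h : μX x ≤ PX x
      · rw [if_pos h, max_eq_right (by linarith)]
      · rw [if_neg h, max_eq_left (by linarith [not_le.mp h])]
    have h2 := hβ A
    have h3 : ∑ x ∈ A, (PX x - μX x) = (∑ x ∈ A, PX x) - ∑ x ∈ A, μX x :=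
      Finset.sum_sub_distrib _ _
    have h4 : (∑ x ∈ A, PX x) - ∑ x ∈ A, μX x ≤ β := by
      calc (∑ x ∈ A, PX x) - ∑ x ∈ A, μX x
          ≤ |(∑ x ∈ A, PX x) - ∑ x ∈ A, μX x| := le_abs_self _
        _ = |(∑ x ∈ A, μX x) - ∑ x ∈ A, PX x| := abs_sub_comm _ _
        _ ≤ β := h2
    rw [h1, h3]; exact h4
  have hposY : ∑ y, max 0 (P1Y y - μY y) ≤ γ := by
    have hmono : ∀ y, max 0 (P1Y y - μY y) ≤ max 0 (PY y - μY y) := by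
      intro y
      have : P1Y y ≤ PY y := sum_le_sum fun x _ => hP1le _
      exact max_le_max (le_refl 0) (by linarith)
    have hPle : ∑ y, max 0 (PY y - μY y) ≤ γ := by
      set A : Finset ΩY := univ.filter (fun y => μY y ≤ PY y) with hA
      have h1 : ∑ y, max 0 (PY y - μY y) = ∑ y ∈ A, (PY y - μY y) := by
        rw [hA, Finset.sum_filter]
        apply Finset.sum_congr rfl
        intro y _
        by_cases h : μY y ≤ PY y
        · rw [if_pos h, max_eq_right (by linarith)]
        · rw [if_neg h, max_eq_left (by linarith [not_le.mp h])]
      have h2 := hγ A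
      have h3 : ∑ y ∈ A, (PY y - μY y) = (∑ y ∈ A, PY y) - ∑ y ∈ A, μY y :=
        Finset.sum_sub_distrib _ _
      have h4 : (∑ y ∈ A, PY y) - ∑ y ∈ A, μY y ≤ γ := by
        calc (∑ y ∈ A, PY y) - ∑ y ∈ A, μY y
            ≤ |(∑ y ∈ A, PY y) - ∑ y ∈ A, μY y| := le_abs_self _
          _ = |(∑ y ∈ A, μY y) - ∑ y ∈ A, PY y| := abs_sub_comm _ _
          _ ≤ γ := h2
      rw [h1, h3]; exact h4
    calc ∑ y, max 0 (P1Y y - μY y) ≤ ∑ y, max 0 (PY y - μY y) :=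
          sum_le_sum fun y _ => hmono y
      _ ≤ γ := hPle
  have hsumP1 : ∑ q, P1 q = 1 - ∑ x, max 0 (PX x - μX x) := by
    rw [Fintype.sum_prod_type]
    simp only [hP1X]
    have : ∀ x, min (PX x) (μX x) = PX x - max 0 (PX x - μX x) := fun x => minmax _ _
    rw [Finset.sum_congr rfl (fun x _ => this x), Finset.sum_sub_distrib]
    have : ∑ x, PX x = 1 := by rw [hPXdef, ← Fintype.sum_prod_type]; exact hP1
    rw [this]
  have hsumP2 : ∑ q, P2 q = (∑ q, P1 q) - ∑ y, max 0 (P1Y y - μY y) := by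
    rw [hsum2']
    simp only [hP2Y]
    have h5 : ∀ y, min (P1Y y) (μY y) = P1Y y - max 0 (P1Y y - μY y) := fun y => minmax _ _
    rw [Finset.sum_congr rfl (fun y _ => h5 y), Finset.sum_sub_distrib]
    have : ∑ y, P1Y y = ∑ q, P1 q := by
      rw [hP1Ydef, ← Fintype.sum_prod_type_right]
    rw [this]
  have hsβγ : s ≤ β + γ := by
    rw [hsa, hsumP2, hsumP1]
    linarith
  refine ⟨π, hπ0, hπ1, hπX, hπY, ?_⟩
  have hB : ∑ q ∈ B, π q = (∑ q ∈ B, P2 q) + ∑ q ∈ B, fill q := Finset.sum_add_distrib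
  have hB1 : ∑ q ∈ B, P2 q ≤ ∑ q ∈ B, P q :=
    sum_le_sum fun q _ => le_trans (hP2le q) (hP1le q)
  have hB2 : ∑ q ∈ B, fill q ≤ s := by
    rw [← hfilltot]
    exact Finset.sum_le_sum_of_subset_of_nonneg (subset_univ B) (fun q _ _ => hfill0 q)
  rw [hB]
  linarith
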